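/- Intermediate lower bound in the optimality-gap proof: Let S (states) and A (actions) be finite nonempty types, let γ be a real number with 0 < γ < 1, let r_max > 0, set c = r_max/(1−γ), and let μ₀ be a probability vector on S. Let T, T̂ : S → A → S → ℝ be transition kernels and let r : S → A → ℝ satisfy |r s a| ≤ r_max for all s, a. For a policy π and dynamics K ∈ {T, T̂}, let P_{K,π} be the induced state-transition matrix and ρ^π_K the normalized state–action occupancy, and let η_M(π) = ∑_{s,a} ρ^π_T(s,a) · r s a be the normalized true return. Let u, û : S → A → ℝ and ε_density ≥ 0 satisfy |u s' a − û s' a| ≤ ε_density for all s', a, and set U(s,a) = ∑_{s'} T̂ s a s' · u s' a and Û(s,a) = ∑_{s'} T̂ s a s' · û s' a. Assume there exist C > 0 and ε_approx ≥ 0 such that for all (s,a) and all f : S → ℝ with |f s'| ≤ 1 for all s', one has |∑_{s'} (T̂ s a s' − T s a s') · f s'| ≤ C · U(s,a) + ε_approx. Set λ = γ·c·C. Suppose π̂ is a policy such that for every policy π, ∑_{s,a} ρ^{π̂}_{T̂}(s,a) · (r s a − λ·Û(s,a)) ≥ ∑_{s,a} ρ^π_{T̂}(s,a) · (r s a − λ·Û(s,a)).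 Then for every policy π, η_M(π̂) ≥ ∑_{s,a} ρ^π_{T̂}(s,a) · (r s a − λ·U(s,a)) − 2·λ·ε_density − γ·c·ε_approx. -/

import Mathlib

/-- A transition kernel on finite state and action spaces. -/
def IsKernel {S A : Type*} [Fintype S] (K : S → A → S → ℝ) : Prop :=
  (∀ s a s', 0 ≤ K s a s') ∧ ∀ s a, ∑ s', K s a s' = 1

/-- A (stationary, stochastic) policy. -/
def IsPolicy {S A : Type*} [Fintype A] (π : S → A → ℝ) : Prop :=
  (∀ s a, 0 ≤ π s a) ∧ ∀ s, ∑ a, π s a = 1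

/-- The state-transition matrix induced by dynamics `K` and policy `π`. -/
noncomputable def stateMatrix {S A : Type*} [Fintype A]
    (K : S → A → S → ℝ) (π : S → A → ℝ) : Matrix S S ℝ :=
  fun s s' => ∑ a, π s a * K s a s'

/-- The normalized discounted state–action occupancy of `μ₀` under dynamics `K`
and policy `π`. -/
noncomputable def occupancy {S A : Type*} [Fintype S] [Fintype A] [DecidableEq S]
    (γ : ℝ) (μ₀ : S → ℝ) (K : S → A → S → ℝ) (π : S → A → ℝ) (s : S) (a : A) : ℝ :=
  (1 - γ) * ∑' t : ℕ, γ ^ t * Matrix.vecMul μ₀ (stateMatrix K π ^ t) s * π s a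


set_option linter.unusedSectionVars false
set_option linter.unusedVariables false
open Finset Matrix

section aux
variable {S : Type*} [Fintype S] [DecidableEq S]

/-- row-stochastic matrix basics -/
def RowStoch (P : Matrix S S ℝ) : Prop := (∀ i j, 0 ≤ P i j) ∧ ∀ i, ∑ j, P i j = 1

lemma prob_vecMul {P : Matrix S S ℝ} (hP : RowStoch P) {μ : S → ℝ}
    (h0 : ∀ s, 0 ≤ μ s) (h1 : ∑ s, μ s = 1) :
    (∀ s, 0 ≤ vecMul μ P s) ∧ ∑ s, vecMul μ P s = 1 := by
  constructor
  · intro s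
    simp only [vecMul, dotProduct]
    exact Finset.sum_nonneg fun i _ => mul_nonneg (h0 i) (hP.1 i s)
  · simp only [vecMul, dotProduct]
    rw [Finset.sum_comm]
    simp_rw [← Finset.mul_sum]
    simp_rw [hP.2]
    simpa using h1

lemma prob_pow {P : Matrix S S ℝ} (hP : RowStoch P) {μ : S → ℝ}
    (h0 : ∀ s, 0 ≤ μ s) (h1 : ∑ s, μ s = 1) (t : ℕ) :
    (∀ s, 0 ≤ vecMul μ (P ^ t) s) ∧ ∑ s, vecMul μ (P ^ t) s = 1 := by
  induction t with
  | zero => simpa [vecMul_one] using ⟨h0, h1⟩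
  | succ n ih =>
      rw [pow_succ]
      simp_rw [← vecMul_vecMul]
      exact prob_vecMul hP ih.1 ih.2

lemma prob_pow_le_one {P : Matrix S S ℝ} (hP : RowStoch P) {μ : S → ℝ}
    (h0 : ∀ s, 0 ≤ μ s) (h1 : ∑ s, μ s = 1) (t : ℕ) (s : S) :
    vecMul μ (P ^ t) s ≤ 1 := by
  have h := prob_pow hP h0 h1 t
  calc vecMul μ (P ^ t) s ≤ ∑ s', vecMul μ (P ^ t) s' :=
        Finset.single_le_sum (fun i _ => h.1 i) (Finset.mem_univ s)
    _ = 1 := h.2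

lemma mulVec_abs_le {P : Matrix S S ℝ} (hP : RowStoch P) {x : S → ℝ} {B : ℝ}
    (hx : ∀ s, |x s| ≤ B) (s : S) : |(P *ᵥ x) s| ≤ B := by
  simp only [mulVec, dotProduct]
  calc |∑ j, P s j * x j| ≤ ∑ j, |P s j * x j| := Finset.abs_sum_le_sum_abs _ _
    _ ≤ ∑ j, P s j * B := by
        refine Finset.sum_le_sum fun j _ => ?_
        rw [abs_mul, abs_of_nonneg (hP.1 s j)]
        exact mul_le_mul_of_nonneg_left (hx j) (hP.1 s j)
    _ = B := by rw [← Finset.sum_mul, hP.2 s, one_mul]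


lemma pow_mulVec_abs_le {P : Matrix S S ℝ} (hP : RowStoch P) {x : S → ℝ} {B : ℝ}
    (hB : 0 ≤ B) (hx : ∀ s, |x s| ≤ B) (t : ℕ) (s : S) : |((P ^ t) *ᵥ x) s| ≤ B := by
  induction t generalizing s with
  | zero => simpa using hx s
  | succ n ih =>
      rw [pow_succ']
      rw [← mulVec_mulVec]
      exact mulVec_abs_le hP ih s

noncomputable def Dfun (γ : ℝ) (μ : S → ℝ) (P : Matrix S S ℝ) (s : S) : ℝ :=
  ∑' t : ℕ, γ ^ t * vecMul μ (P ^ t) s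

noncomputable def Wfun (γ : ℝ) (P : Matrix S S ℝ) (x : S → ℝ) (s : S) : ℝ :=
  ∑' t : ℕ, γ ^ t * ((P ^ t) *ᵥ x) s

variable {γ : ℝ} {μ : S → ℝ} {P : Matrix S S ℝ} {x B : S → ℝ}

lemma summable_D (hγ0 : 0 ≤ γ) (hγ1 : γ < 1) (hP : RowStoch P)
    (h0 : ∀ s, 0 ≤ μ s) (h1 : ∑ s, μ s = 1) (s : S) :
    Summable (fun t : ℕ => γ ^ t * vecMul μ (P ^ t) s) := by
  refine Summable.of_norm_bounded (summable_geometric_of_lt_one hγ0 hγ1) ?_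
  intro t
  rw [Real.norm_eq_abs, abs_mul, abs_of_nonneg (pow_nonneg hγ0 t),
    abs_of_nonneg ((prob_pow hP h0 h1 t).1 s)]
  have := prob_pow_le_one hP h0 h1 t s
  nlinarith [pow_nonneg hγ0 t]

lemma summable_W {B : ℝ} (hγ0 : 0 ≤ γ) (hγ1 : γ < 1) (hP : RowStoch P) (hB : 0 ≤ B)
    {x : S → ℝ} (hx : ∀ s, |x s| ≤ B) (s : S) :
    Summable (fun t : ℕ => γ ^ t * ((P ^ t) *ᵥ x) s) := by
  refine Summable.of_norm_bounded
    ((summable_geometric_of_lt_one hγ0 hγ1).mul_left B) ?_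
  intro t
  show ‖γ ^ t * ((P ^ t) *ᵥ x) s‖ ≤ B * γ ^ t
  rw [Real.norm_eq_abs, abs_mul, abs_of_nonneg (pow_nonneg hγ0 t), mul_comm B]
  exact mul_le_mul_of_nonneg_left (pow_mulVec_abs_le hP hB hx t s) (pow_nonneg hγ0 t)

lemma Wfun_abs_le {B : ℝ} (hγ0 : 0 ≤ γ) (hγ1 : γ < 1) (hP : RowStoch P) (hB : 0 ≤ B)
    {x : S → ℝ} (hx : ∀ s, |x s| ≤ B) (s : S) : |Wfun γ P x s| ≤ B / (1 - γ) := by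
  have h1γ : (0:ℝ) < 1 - γ := by linarith
  calc |Wfun γ P x s| ≤ ∑' t : ℕ, ‖γ ^ t * ((P ^ t) *ᵥ x) s‖ := by
        rw [← Real.norm_eq_abs]
        exact norm_tsum_le_tsum_norm ((summable_W hγ0 hγ1 hP hB hx s).abs)
    _ ≤ ∑' t : ℕ, B * γ ^ t := by
        refine Summable.tsum_le_tsum ?_ ((summable_W hγ0 hγ1 hP hB hx s).abs)
          ((summable_geometric_of_lt_one hγ0 hγ1).mul_left B)
        intro t
        rw [Real.norm_eq_abs, abs_mul, abs_of_nonneg (pow_nonneg hγ0 t), mul_comm B]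
        exact mul_le_mul_of_nonneg_left (pow_mulVec_abs_le hP hB hx t s) (pow_nonneg hγ0 t)
    _ = B / (1 - γ) := by
        rw [tsum_mul_left, tsum_geometric_of_lt_one hγ0 hγ1]
        rw [div_eq_mul_inv]

lemma Dfun_nonneg (hγ0 : 0 ≤ γ) (hγ1 : γ < 1) (hP : RowStoch P)
    (h0 : ∀ s, 0 ≤ μ s) (h1 : ∑ s, μ s = 1) (s : S) : 0 ≤ Dfun γ μ P s :=
  tsum_nonneg fun t => mul_nonneg (pow_nonneg hγ0 t) ((prob_pow hP h0 h1 t).1 s)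

lemma Dfun_sum (hγ0 : 0 ≤ γ) (hγ1 : γ < 1) (hP : RowStoch P)
    (h0 : ∀ s, 0 ≤ μ s) (h1 : ∑ s, μ s = 1) :
    ∑ s, Dfun γ μ P s = (1 - γ)⁻¹ := by
  unfold Dfun
  rw [← Summable.tsum_finsetSum (fun s _ => summable_D hγ0 hγ1 hP h0 h1 s)]
  have : ∀ t : ℕ, ∑ s, γ ^ t * vecMul μ (P ^ t) s = γ ^ t := by
    intro t
    rw [← Finset.mul_sum, (prob_pow hP h0 h1 t).2, mul_one]
  simp_rw [this]
  exact tsum_geometric_of_lt_one hγ0 hγ1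

lemma Dfun_flow (hγ0 : 0 ≤ γ) (hγ1 : γ < 1) (hP : RowStoch P)
    (h0 : ∀ s, 0 ≤ μ s) (h1 : ∑ s, μ s = 1) (s : S) :
    Dfun γ μ P s = μ s + γ * ∑ s'', Dfun γ μ P s'' * P s'' s := by
  unfold Dfun
  rw [Summable.tsum_eq_zero_add (summable_D hγ0 hγ1 hP h0 h1 s)]
  congr 1
  · simp [vecMul_one]
  have hshift : ∀ t : ℕ, γ ^ (t+1) * vecMul μ (P ^ (t+1)) s
      = ∑ s'', γ * (γ ^ t * vecMul μ (P ^ t) s'') * P s'' s := by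
    intro t
    have hp : P ^ (t+1) = P ^ t * P := pow_succ P t
    rw [hp, ← vecMul_vecMul]
    simp only [vecMul, dotProduct]
    rw [Finset.mul_sum]
    refine Finset.sum_congr rfl fun s'' _ => ?_
    ring
  simp_rw [hshift]
  rw [Summable.tsum_finsetSum (fun s'' _ => by
    have := (summable_D hγ0 hγ1 hP h0 h1 s'').mul_left γ
    exact (this.mul_right (P s'' s)).congr fun t => by ring)]
  rw [Finset.mul_sum]
  refine Finset.sum_congr rfl fun s'' _ => ?_
  rw [tsum_mul_right, tsum_mul_left]
  ring

lemma Wfun_bellman {B : ℝ} (hγ0 : 0 ≤ γ) (hγ1 : γ < 1) (hP : RowStoch P) (hB : 0 ≤ B)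
    {x : S → ℝ} (hx : ∀ s, |x s| ≤ B) (s : S) :
    Wfun γ P x s = x s + γ * ∑ s', P s s' * Wfun γ P x s' := by
  unfold Wfun
  rw [Summable.tsum_eq_zero_add (summable_W hγ0 hγ1 hP hB hx s)]
  congr 1
  · simp
  have hshift : ∀ t : ℕ, γ ^ (t+1) * ((P ^ (t+1)) *ᵥ x) s
      = ∑ s', γ * (P s s' * (γ ^ t * ((P ^ t) *ᵥ x) s')) := by
    intro t
    have hp : P ^ (t+1) = P * P ^ t := pow_succ' P t
    rw [hp, ← mulVec_mulVec]
    simp only [mulVec, dotProduct]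
    rw [Finset.mul_sum]
    refine Finset.sum_congr rfl fun s' _ => ?_
    ring
  simp_rw [hshift]
  rw [Summable.tsum_finsetSum (fun s' _ => by
    have := (summable_W hγ0 hγ1 hP hB hx s').mul_left (γ * P s s')
    exact this.congr fun t => by ring)]
  rw [Finset.mul_sum]
  refine Finset.sum_congr rfl fun s' _ => ?_
  rw [tsum_mul_left, tsum_mul_left]

lemma duality {B : ℝ} (hγ0 : 0 ≤ γ) (hγ1 : γ < 1) (hP : RowStoch P) (hB : 0 ≤ B)
    (h0 : ∀ s, 0 ≤ μ s) (h1 : ∑ s, μ s = 1)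
    {x : S → ℝ} (hx : ∀ s, |x s| ≤ B) :
    ∑ s, μ s * Wfun γ P x s = ∑ s, Dfun γ μ P s * x s := by
  have key : ∀ t : ℕ, ∑ s, μ s * (γ ^ t * ((P ^ t) *ᵥ x) s)
      = ∑ s, (γ ^ t * vecMul μ (P ^ t) s) * x s := by
    intro t
    have := dotProduct_mulVec μ (P ^ t) x
    simp only [dotProduct] at this
    calc ∑ s, μ s * (γ ^ t * ((P ^ t) *ᵥ x) s)
        = γ ^ t * ∑ s, μ s * ((P ^ t) *ᵥ x) s := by
          rw [Finset.mul_sum]; exact Finset.sum_congr rfl fun s _ => by ring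
      _ = γ ^ t * ∑ s, vecMul μ (P ^ t) s * x s := by rw [this]
      _ = ∑ s, (γ ^ t * vecMul μ (P ^ t) s) * x s := by
          rw [Finset.mul_sum]; exact Finset.sum_congr rfl fun s _ => by ring
  calc ∑ s, μ s * Wfun γ P x s
      = ∑ s, ∑' t : ℕ, μ s * (γ ^ t * ((P ^ t) *ᵥ x) s) := by
        refine Finset.sum_congr rfl fun s _ => ?_
        rw [Wfun, tsum_mul_left]
    _ = ∑' t : ℕ, ∑ s, μ s * (γ ^ t * ((P ^ t) *ᵥ x) s) := by
        rw [Summable.tsum_finsetSum (fun s _ => (summable_W hγ0 hγ1 hP hB hx s).mul_left (μ s))]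
    _ = ∑' t : ℕ, ∑ s, (γ ^ t * vecMul μ (P ^ t) s) * x s := by
        exact tsum_congr fun t => key t
    _ = ∑ s, ∑' t : ℕ, (γ ^ t * vecMul μ (P ^ t) s) * x s := by
        rw [Summable.tsum_finsetSum (fun s _ => (summable_D hγ0 hγ1 hP h0 h1 s).mul_right (x s))]
    _ = ∑ s, Dfun γ μ P s * x s := by
        refine Finset.sum_congr rfl fun s _ => ?_
        rw [Dfun, tsum_mul_right]


lemma sim_identity {B : ℝ} (hγ0 : 0 ≤ γ) (hγ1 : γ < 1) {P Phat : Matrix S S ℝ}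
    (hP : RowStoch P) (hPhat : RowStoch Phat) (hB : 0 ≤ B)
    (h0 : ∀ s, 0 ≤ μ s) (h1 : ∑ s, μ s = 1)
    {x : S → ℝ} (hx : ∀ s, |x s| ≤ B) :
    ∑ s, Dfun γ μ P s * x s
      = ∑ s, Dfun γ μ Phat s * x s
        + γ * ∑ s, Dfun γ μ Phat s *
            (∑ s', (P s s' - Phat s s') * Wfun γ P x s') := by
  set W := Wfun γ P x with hWdef
  set Dh := Dfun γ μ Phat with hDdef
  have flow : ∀ s, μ s = Dh s - γ * ∑ s'', Dh s'' * Phat s'' s := by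
    intro s
    have := Dfun_flow hγ0 hγ1 hPhat h0 h1 s
    rw [← hDdef] at this
    linarith
  have bell : ∀ s, W s = x s + γ * ∑ s', P s s' * W s' :=
    fun s => Wfun_bellman hγ0 hγ1 hP hB hx s
  have E1 : ∑ s, μ s * W s
      = ∑ s, Dh s * W s - γ * ∑ s'', Dh s'' * ∑ s, Phat s'' s * W s := by
    calc ∑ s, μ s * W s
        = ∑ s, (Dh s * W s - γ * ∑ s'', Dh s'' * Phat s'' s * W s) := by
          refine Finset.sum_congr rfl fun s _ => ?_
          rw [flow s, sub_mul, mul_assoc, Finset.sum_mul]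
      _ = ∑ s, Dh s * W s - ∑ s, γ * ∑ s'', Dh s'' * Phat s'' s * W s := by
          rw [Finset.sum_sub_distrib]
      _ = ∑ s, Dh s * W s - γ * ∑ s'', Dh s'' * ∑ s, Phat s'' s * W s := by
          congr 1
          rw [← Finset.mul_sum, Finset.sum_comm]
          congr 1
          refine Finset.sum_congr rfl fun s'' _ => ?_
          rw [Finset.mul_sum]
          exact Finset.sum_congr rfl fun s _ => by ring
  have E2 : ∑ s, Dh s * W s
      = ∑ s, Dh s * x s + γ * ∑ s, Dh s * ∑ s', P s s' * W s' := by
    calc ∑ s, Dh s * W s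
        = ∑ s, (Dh s * x s + γ * (Dh s * ∑ s', P s s' * W s')) := by
          refine Finset.sum_congr rfl fun s _ => ?_
          rw [bell s]; ring
      _ = ∑ s, Dh s * x s + γ * ∑ s, Dh s * ∑ s', P s s' * W s' := by
          rw [Finset.sum_add_distrib, Finset.mul_sum]
  have lhs : ∑ s, Dfun γ μ P s * x s = ∑ s, μ s * W s :=
    (duality hγ0 hγ1 hP hB h0 h1 hx).symm
  rw [lhs, E1, E2]
  have expand : ∑ s, Dh s * (∑ s', (P s s' - Phat s s') * W s')
      = ∑ s, Dh s * ∑ s', P s s' * W s' - ∑ s, Dh s * ∑ s', Phat s s' * W s' := by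
    rw [← Finset.sum_sub_distrib]
    refine Finset.sum_congr rfl fun s _ => ?_
    rw [← mul_sub, ← Finset.sum_sub_distrib]
    congr 1
    exact Finset.sum_congr rfl fun s' _ => by ring
  rw [expand]
  ring

end aux

section occ
variable {S A : Type*} [Fintype S] [Fintype A] [DecidableEq S]

lemma stoch_stateMatrix {K : S → A → S → ℝ} {π : S → A → ℝ}
    (hK : IsKernel K) (hπ : IsPolicy π) : RowStoch (stateMatrix K π) := by
  constructor
  · intro i j
    exact Finset.sum_nonneg fun a _ => mul_nonneg (hπ.1 i a) (hK.1 i a j)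
  · intro i
    simp_rw [stateMatrix]
    rw [Finset.sum_comm]
    calc ∑ a, ∑ j, π i a * K i a j = ∑ a, π i a * ∑ j, K i a j := by
          exact Finset.sum_congr rfl fun a _ => (Finset.mul_sum _ _ _).symm
      _ = 1 := by simp_rw [hK.2]; simpa using hπ.2 i

lemma occupancy_eq (γ : ℝ) (μ₀ : S → ℝ) (K : S → A → S → ℝ) (π : S → A → ℝ)
    (s : S) (a : A) :
    occupancy γ μ₀ K π s a = (1 - γ) * Dfun γ μ₀ (stateMatrix K π) s * π s a := by
  unfold occupancy Dfun
  rw [tsum_mul_right]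
  ring

lemma occupancy_nonneg {γ : ℝ} (hγ0 : 0 ≤ γ) (hγ1 : γ < 1) {μ₀ : S → ℝ}
    (h0 : ∀ s, 0 ≤ μ₀ s) (h1 : ∑ s, μ₀ s = 1)
    {K : S → A → S → ℝ} {π : S → A → ℝ} (hK : IsKernel K) (hπ : IsPolicy π)
    (s : S) (a : A) : 0 ≤ occupancy γ μ₀ K π s a := by
  rw [occupancy_eq]
  have h1 := Dfun_nonneg hγ0 hγ1 (stoch_stateMatrix hK hπ) h0 h1 s
  have h2 := hπ.1 s a
  have h3 : (0:ℝ) ≤ 1 - γ := by linarith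
  exact mul_nonneg (mul_nonneg h3 h1) h2

lemma occupancy_total {γ : ℝ} (hγ0 : 0 ≤ γ) (hγ1 : γ < 1) {μ₀ : S → ℝ}
    (h0 : ∀ s, 0 ≤ μ₀ s) (h1 : ∑ s, μ₀ s = 1)
    {K : S → A → S → ℝ} {π : S → A → ℝ} (hK : IsKernel K) (hπ : IsPolicy π) :
    ∑ s, ∑ a, occupancy γ μ₀ K π s a = 1 := by
  have h1γ : (1:ℝ) - γ ≠ 0 := by intro h; linarith
  simp_rw [occupancy_eq]
  calc ∑ s, ∑ a, (1 - γ) * Dfun γ μ₀ (stateMatrix K π) s * π s a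
      = ∑ s, (1 - γ) * Dfun γ μ₀ (stateMatrix K π) s * ∑ a, π s a := by
        exact Finset.sum_congr rfl fun s _ => (Finset.mul_sum _ _ _).symm
    _ = (1 - γ) * ∑ s, Dfun γ μ₀ (stateMatrix K π) s := by
        simp_rw [hπ.2]
        rw [Finset.mul_sum]
        exact Finset.sum_congr rfl fun s _ => by ring
    _ = 1 := by
        rw [Dfun_sum hγ0 hγ1 (stoch_stateMatrix hK hπ) h0 h1]
        field_simp

lemma sum_occ_bound (ρ g : S → A → ℝ) (hρ0 : ∀ s a, 0 ≤ ρ s a)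
    (hρ1 : ∑ s, ∑ a, ρ s a = 1) (M : ℝ) (hg : ∀ s a, |g s a| ≤ M) :
    |∑ s, ∑ a, ρ s a * g s a| ≤ M := by
  calc |∑ s, ∑ a, ρ s a * g s a| ≤ ∑ s, |∑ a, ρ s a * g s a| := Finset.abs_sum_le_sum_abs _ _
    _ ≤ ∑ s, ∑ a, |ρ s a * g s a| :=
        Finset.sum_le_sum fun s _ => Finset.abs_sum_le_sum_abs _ _
    _ ≤ ∑ s, ∑ a, ρ s a * M := by
        refine Finset.sum_le_sum fun s _ => Finset.sum_le_sum fun a _ => ?_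
        rw [abs_mul, abs_of_nonneg (hρ0 s a)]
        exact mul_le_mul_of_nonneg_left (hg s a) (hρ0 s a)
    _ = M := by
        simp_rw [← Finset.sum_mul]
        rw [hρ1, one_mul]

end occ


/-- Intermediate lower bound in the optimality-gap proof (equation
`before_conversion` in the paper). -/
theorem optimality_gap_intermediate {S A : Type*} [Fintype S] [Fintype A]
    [DecidableEq S] [Nonempty S] [Nonempty A]
    (γ : ℝ) (hγ0 : 0 < γ) (hγ1 : γ < 1)
    (r_max : ℝ) (hr_max : 0 < r_max)
    (c : ℝ) (hc : c = r_max / (1 - γ))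
    (μ₀ : S → ℝ) (hμ0 : ∀ x, 0 ≤ μ₀ x) (hμ1 : ∑ x, μ₀ x = 1)
    (T That : S → A → S → ℝ) (hT : IsKernel T) (hThat : IsKernel That)
    (r : S → A → ℝ) (hr : ∀ s a, |r s a| ≤ r_max)
    (u uhat : S → A → ℝ) (ε_density : ℝ) (hεd : 0 ≤ ε_density)
    (hu : ∀ s' a, |u s' a - uhat s' a| ≤ ε_density)
    (U Uhat : S → A → ℝ)
    (hU : ∀ s a, U s a = ∑ s', That s a s' * u s' a)
    (hUhat : ∀ s a, Uhat s a = ∑ s', That s a s' * uhat s' a)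
    (C : ℝ) (hC : 0 < C) (ε_approx : ℝ) (hεa : 0 ≤ ε_approx)
    (hmodel : ∀ s a, ∀ f : S → ℝ, (∀ s', |f s'| ≤ 1) →
      |∑ s', (That s a s' - T s a s') * f s'| ≤ C * U s a + ε_approx)
    (lam : ℝ) (hlam : lam = γ * c * C)
    (πhat : S → A → ℝ) (hπhat : IsPolicy πhat)
    (hopt : ∀ π : S → A → ℝ, IsPolicy π →
      (∑ s, ∑ a, occupancy γ μ₀ That πhat s a * (r s a - lam * Uhat s a)) ≥
        ∑ s, ∑ a, occupancy γ μ₀ That π s a * (r s a - lam * Uhat s a)) :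
    ∀ π : S → A → ℝ, IsPolicy π →
      (∑ s, ∑ a, occupancy γ μ₀ T πhat s a * r s a) ≥
        (∑ s, ∑ a, occupancy γ μ₀ That π s a * (r s a - lam * U s a)) -
          2 * lam * ε_density - γ * c * ε_approx := by
  intro π hπ
  have hγ0' : (0:ℝ) ≤ γ := le_of_lt hγ0
  have h1γ : (0:ℝ) < 1 - γ := by linarith
  have hc0 : 0 < c := by rw [hc]; positivity
  have hlam0 : 0 ≤ lam := by rw [hlam]; positivity
  set P := stateMatrix T πhat with hPdef
  set Ph := stateMatrix That πhat with hPhdef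
  have hP : RowStoch P := stoch_stateMatrix hT hπhat
  have hPh : RowStoch Ph := stoch_stateMatrix hThat hπhat
  set x : S → ℝ := fun s => ∑ a, πhat s a * r s a with hxdef
  have hx : ∀ s, |x s| ≤ r_max := by
    intro s
    calc |x s| ≤ ∑ a, |πhat s a * r s a| := Finset.abs_sum_le_sum_abs _ _
      _ ≤ ∑ a, πhat s a * r_max := by
          refine Finset.sum_le_sum fun a _ => ?_
          rw [abs_mul, abs_of_nonneg (hπhat.1 s a)]
          exact mul_le_mul_of_nonneg_left (hr s a) (hπhat.1 s a)
      _ = r_max := by rw [← Finset.sum_mul, hπhat.2 s, one_mul]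
  set W := Wfun γ P x with hWdef
  have hW : ∀ s, |W s| ≤ c := by
    intro s; rw [hc]
    exact Wfun_abs_le hγ0' hγ1 hP hr_max.le hx s
  set g : S → A → ℝ := fun s a => ∑ s', (T s a s' - That s a s') * W s' with hgdef
  -- bound on g
  have claim2 : ∀ s a, |g s a| ≤ c * (C * U s a + ε_approx) := by
    intro s a
    have hfs : ∀ s', |W s' / c| ≤ 1 := by
      intro s'
      rw [abs_div, abs_of_pos hc0]
      exact (div_le_one hc0).2 (hW s')
    have h2 := hmodel s a (fun s' => W s' / c) hfs
    have hg : g s a = -(c * ∑ s', (That s a s' - T s a s') * (W s' / c)) := by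
      rw [hgdef]
      simp only
      rw [Finset.mul_sum, ← Finset.sum_neg_distrib]
      refine Finset.sum_congr rfl fun s' _ => ?_
      field_simp
      ring
    calc |g s a| = c * |∑ s', (That s a s' - T s a s') * (W s' / c)| := by
          rw [hg, abs_neg, abs_mul, abs_of_pos hc0]
      _ ≤ c * (C * U s a + ε_approx) := mul_le_mul_of_nonneg_left h2 hc0.le
  -- occupancy facts
  have hρh0 : ∀ s a, 0 ≤ occupancy γ μ₀ That πhat s a :=
    occupancy_nonneg hγ0' hγ1 hμ0 hμ1 hThat hπhat
  have hρh1 : ∑ s, ∑ a, occupancy γ μ₀ That πhat s a = 1 :=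
    occupancy_total hγ0' hγ1 hμ0 hμ1 hThat hπhat
  have hρπ0 : ∀ s a, 0 ≤ occupancy γ μ₀ That π s a :=
    occupancy_nonneg hγ0' hγ1 hμ0 hμ1 hThat hπ
  have hρπ1 : ∑ s, ∑ a, occupancy γ μ₀ That π s a = 1 :=
    occupancy_total hγ0' hγ1 hμ0 hμ1 hThat hπ
  -- return rewriting
  have hret : ∀ K : S → A → S → ℝ,
      ∑ s, ∑ a, occupancy γ μ₀ K πhat s a * r s a
        = (1 - γ) * ∑ s, Dfun γ μ₀ (stateMatrix K πhat) s * x s := by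
    intro K
    rw [Finset.mul_sum]
    refine Finset.sum_congr rfl fun s _ => ?_
    simp_rw [occupancy_eq, hxdef]
    rw [Finset.mul_sum, Finset.mul_sum]
    exact Finset.sum_congr rfl fun a _ => by ring
  -- per-state error expansion
  have claim1 : ∀ s, ∑ s', (P s s' - Ph s s') * W s' = ∑ a, πhat s a * g s a := by
    intro s
    have hterm : ∀ s', (P s s' - Ph s s') * W s'
        = ∑ a, πhat s a * ((T s a s' - That s a s') * W s') := by
      intro s'
      rw [hPdef, hPhdef]
      simp only [stateMatrix]
      rw [← Finset.sum_sub_distrib, Finset.sum_mul]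
      exact Finset.sum_congr rfl fun a _ => by ring
    simp_rw [hterm]
    rw [Finset.sum_comm]
    refine Finset.sum_congr rfl fun a _ => ?_
    rw [hgdef]
    simp only
    rw [Finset.mul_sum]
  -- simulation identity
  have hsim := sim_identity (μ := μ₀) hγ0' hγ1 hP hPh hr_max.le hμ0 hμ1 hx
  have hErrEq : (1 - γ) * ∑ s, Dfun γ μ₀ Ph s * (∑ s', (P s s' - Ph s s') * W s')
      = ∑ s, ∑ a, occupancy γ μ₀ That πhat s a * g s a := by
    rw [Finset.mul_sum]
    refine Finset.sum_congr rfl fun s _ => ?_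
    rw [claim1 s]
    simp_rw [occupancy_eq]
    rw [Finset.mul_sum, Finset.mul_sum]
    refine Finset.sum_congr rfl fun a _ => ?_
    rw [hPhdef]
    ring
  have hA : ∑ s, ∑ a, occupancy γ μ₀ T πhat s a * r s a
      = (∑ s, ∑ a, occupancy γ μ₀ That πhat s a * r s a)
        + γ * ∑ s, ∑ a, occupancy γ μ₀ That πhat s a * g s a := by
    rw [hret T, hret That, ← hPdef, ← hPhdef, hsim, ← hErrEq]
    ring
  -- bound on the error term
  have hB : γ * ∑ s, ∑ a, occupancy γ μ₀ That πhat s a * g s a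
      ≥ -(∑ s, ∑ a, occupancy γ μ₀ That πhat s a * (lam * U s a)) - γ * c * ε_approx := by
    have per : ∀ s a, occupancy γ μ₀ That πhat s a * (γ * g s a)
        ≥ -(occupancy γ μ₀ That πhat s a * (lam * U s a))
          - occupancy γ μ₀ That πhat s a * (γ * c * ε_approx) := by
      intro s a
      have h1 : |γ * g s a| ≤ lam * U s a + γ * c * ε_approx := by
        rw [abs_mul, abs_of_nonneg hγ0']
        calc γ * |g s a| ≤ γ * (c * (C * U s a + ε_approx)) :=
              mul_le_mul_of_nonneg_left (claim2 s a) hγ0'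
          _ = lam * U s a + γ * c * ε_approx := by rw [hlam]; ring
      have h2 := hρh0 s a
      nlinarith [neg_abs_le (γ * g s a), mul_le_mul_of_nonneg_left h1 h2]
    calc γ * ∑ s, ∑ a, occupancy γ μ₀ That πhat s a * g s a
        = ∑ s, ∑ a, occupancy γ μ₀ That πhat s a * (γ * g s a) := by
          rw [Finset.mul_sum]
          refine Finset.sum_congr rfl fun s _ => ?_
          rw [Finset.mul_sum]
          exact Finset.sum_congr rfl fun a _ => by ring
      _ ≥ ∑ s, ∑ a, (-(occupancy γ μ₀ That πhat s a * (lam * U s a))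
            - occupancy γ μ₀ That πhat s a * (γ * c * ε_approx)) :=
          Finset.sum_le_sum fun s _ => Finset.sum_le_sum fun a _ => per s a
      _ = -(∑ s, ∑ a, occupancy γ μ₀ That πhat s a * (lam * U s a))
            - (∑ s, ∑ a, occupancy γ μ₀ That πhat s a) * (γ * c * ε_approx) := by
          simp_rw [Finset.sum_sub_distrib, Finset.sum_neg_distrib, Finset.sum_mul]
      _ = -(∑ s, ∑ a, occupancy γ μ₀ That πhat s a * (lam * U s a)) - γ * c * ε_approx := by
          rw [hρh1, one_mul]
  -- U vs Uhat
  have hUU : ∀ s a, |U s a - Uhat s a| ≤ ε_density := by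
    intro s a
    rw [hU, hUhat, ← Finset.sum_sub_distrib]
    calc |∑ s', (That s a s' * u s' a - That s a s' * uhat s' a)|
        ≤ ∑ s', |That s a s' * u s' a - That s a s' * uhat s' a| :=
          Finset.abs_sum_le_sum_abs _ _
      _ ≤ ∑ s', That s a s' * ε_density := by
          refine Finset.sum_le_sum fun s' _ => ?_
          rw [← mul_sub, abs_mul, abs_of_nonneg (hThat.1 s a s')]
          exact mul_le_mul_of_nonneg_left (hu s' a) (hThat.1 s a s')
      _ = ε_density := by rw [← Finset.sum_mul, hThat.2 s a, one_mul]
  have hdiff : ∀ ρ : S → A → ℝ, (∀ s a, 0 ≤ ρ s a) → (∑ s, ∑ a, ρ s a) = 1 →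
      |(∑ s, ∑ a, ρ s a * (r s a - lam * Uhat s a))
        - ∑ s, ∑ a, ρ s a * (r s a - lam * U s a)| ≤ lam * ε_density := by
    intro ρ h0 h1
    have heq : (∑ s, ∑ a, ρ s a * (r s a - lam * Uhat s a))
        - (∑ s, ∑ a, ρ s a * (r s a - lam * U s a))
        = ∑ s, ∑ a, ρ s a * (lam * (U s a - Uhat s a)) := by
      rw [← Finset.sum_sub_distrib]
      refine Finset.sum_congr rfl fun s _ => ?_
      rw [← Finset.sum_sub_distrib]
      exact Finset.sum_congr rfl fun a _ => by ring
    rw [heq]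
    refine sum_occ_bound ρ _ h0 h1 _ fun s a => ?_
    rw [abs_mul, abs_of_nonneg hlam0]
    exact mul_le_mul_of_nonneg_left (hUU s a) hlam0
  -- expand ρ (r − lam U)
  have hexp : ∀ ρ : S → A → ℝ,
      (∑ s, ∑ a, ρ s a * (r s a - lam * U s a))
        = (∑ s, ∑ a, ρ s a * r s a) - ∑ s, ∑ a, ρ s a * (lam * U s a) := by
    intro ρ
    rw [← Finset.sum_sub_distrib]
    refine Finset.sum_congr rfl fun s _ => ?_
    rw [← Finset.sum_sub_distrib]
    exact Finset.sum_congr rfl fun a _ => by ring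
  have step2 := hdiff _ hρh0 hρh1
  have step3 := hopt π hπ
  have step4 := hdiff _ hρπ0 hρπ1
  have habs2 := abs_le.1 step2
  have habs4 := abs_le.1 step4
  have hexp1 := hexp (fun s a => occupancy γ μ₀ That πhat s a)
  rw [hA, ge_iff_le]
  linarith [hexp1, habs2.1, habs2.2, habs4.1, habs4.2, step3, hB]
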